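/- Let Γ be a finitely generated nilpotent group, let K be a closed subgroup of the unitary group U(n), and let i ≥ 2. Then the subset X_i = {ρ ∈ Hom(Γ,K) : Γ_(i) ⊆ ker ρ} of the representation space Hom(Γ,K) (which is canonically homeomorphic to Hom(Γ/Γ_(i), K)) is a union of connected components of Hom(Γ,K); that is, for every ρ ∈ X_i, the connected component of ρ in Hom(Γ,K) is contained in X_i. -/

import Mathlib

/-- The representation space `Hom(Γ,G)`: group homomorphisms with the topology of pointwise
convergence, i.e. the topology induced from the product space `Γ → G`. -/
instance repSpaceTopology {Γ G : Type*} [Group Γ] [Group G] [TopologicalSpace G] :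
    TopologicalSpace (Γ →* G) :=
  TopologicalSpace.induced (fun ρ => (ρ : Γ → G)) Pi.topologicalSpace

open Matrix Polynomial Complex

/-- A unitary matrix with trace `n` is the identity. -/
lemma unitary_trace_eq_card_eq_one {n : ℕ} (M : Matrix (Fin n) (Fin n) ℂ)
    (hM : M ∈ Matrix.unitaryGroup (Fin n) ℂ) (htr : M.trace = n) : M = 1 := by
  have hstar : star M * M = 1 := (Unitary.mem_iff.mp hM).1
  have hcol : ∀ j, ∑ k, Complex.normSq (M k j) = 1 := by
    intro j
    have h1 : (star M * M) j j = 1 := by rw [hstar]; simp [Matrix.one_apply]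
    rw [Matrix.mul_apply] at h1
    have h2 : ∀ k, (star M) j k * M k j = (Complex.normSq (M k j) : ℂ) := by
      intro k
      rw [Matrix.star_apply, Complex.star_def, ← Complex.normSq_eq_conj_mul_self]
    rw [Finset.sum_congr rfl (fun k _ => h2 k)] at h1
    exact_mod_cast h1
  have hnsq_le : ∀ i j, Complex.normSq (M i j) ≤ 1 := by
    intro i j
    calc Complex.normSq (M i j)
        ≤ ∑ k, Complex.normSq (M k j) :=
          Finset.single_le_sum (f := fun k => Complex.normSq (M k j))
            (fun k _ => Complex.normSq_nonneg _) (Finset.mem_univ i)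
      _ = 1 := hcol j
  have hre_le : ∀ j, (M j j).re ≤ 1 := by
    intro j
    have h := hnsq_le j j
    rw [Complex.normSq_apply] at h
    nlinarith [sq_nonneg ((M j j).im), sq_nonneg ((M j j).re - 1)]
  have hsum_re : ∑ j, (M j j).re = n := by
    have : (M.trace).re = (n : ℂ).re := by rw [htr]
    simpa [Matrix.trace, Matrix.diag, Complex.re_sum] using this
  have hre : ∀ j, (M j j).re = 1 := by
    by_contra h
    push_neg at h
    obtain ⟨j0, hj0⟩ := h
    have hlt : (M j0 j0).re < 1 := lt_of_le_of_ne (hre_le j0) hj0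
    have : ∑ j, (M j j).re < ∑ _j : Fin n, (1 : ℝ) :=
      Finset.sum_lt_sum (fun k _ => hre_le k) ⟨j0, Finset.mem_univ _, hlt⟩
    rw [hsum_re] at this
    simp at this
  have hdiag : ∀ j, M j j = 1 := by
    intro j
    have h := hnsq_le j j
    rw [Complex.normSq_apply, hre j] at h
    have him : (M j j).im = 0 := by nlinarith [sq_nonneg ((M j j).im)]
    exact Complex.ext (by simp [hre j]) (by simp [him])
  have hoff : ∀ i j, i ≠ j → M i j = 0 := by
    intro i j hij
    have h1 := hcol j
    have h2 : ∑ k ∈ Finset.univ.erase j, Complex.normSq (M k j) = 0 := by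
      rw [← Finset.add_sum_erase Finset.univ (fun k => Complex.normSq (M k j))
        (Finset.mem_univ j)] at h1
      simp only [hdiag j, Complex.normSq_one] at h1
      linarith
    have h3 := (Finset.sum_eq_zero_iff_of_nonneg
      (fun k _ => Complex.normSq_nonneg (M k j))).mp h2 i
      (Finset.mem_erase.mpr ⟨hij, Finset.mem_univ _⟩)
    exact Complex.normSq_eq_zero.mp h3
  ext i j
  by_cases hij : i = j
  · subst hij; rw [hdiag i, Matrix.one_apply_eq]
  · rw [hoff i j hij, Matrix.one_apply_ne hij]

set_option maxHeartbeats 1000000 in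
/-- Any eigenvalue of the image of a commutator-subgroup element, central in the image,
under a matrix representation is a root of unity of order dividing `n!`. -/
lemma eigenvalue_pow_factorial_eq_one {n : ℕ} {G : Type*} [Group G]
    (φ : G →* Matrix (Fin n) (Fin n) ℂ) (g : G)
    (hg : g ∈ commutator G)
    (hc : ∀ x : G, Commute (φ g) (φ x))
    {μ : ℂ} (hμ : (Matrix.charpoly (φ g)).IsRoot μ) :
    μ ^ n.factorial = 1 := by
  classical
  set M : Matrix (Fin n) (Fin n) ℂ := φ g with hMdef
  -- eigenvector
  have hmap : (Matrix.charmatrix M).map (Polynomial.evalRingHom μ) = μ • (1 : Matrix (Fin n) (Fin n) ℂ) - M := by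
    ext i j
    by_cases h : i = j
    · subst h
      simp [Matrix.charmatrix_apply_eq, Matrix.map_apply, Matrix.one_apply_eq]
    · simp [Matrix.charmatrix_apply_ne _ _ _ h, Matrix.map_apply, Matrix.one_apply_ne h]
  have hdet : (μ • (1 : Matrix (Fin n) (Fin n) ℂ) - M).det = 0 := by
    have h2 : Polynomial.eval μ M.charpoly = (μ • (1 : Matrix (Fin n) (Fin n) ℂ) - M).det := by
      rw [Matrix.charpoly, ← Polynomial.coe_evalRingHom, RingHom.map_det,
        RingHom.mapMatrix_apply, hmap]
    rw [← h2]
    exact hμ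
  obtain ⟨v, hv0, hv⟩ := Matrix.exists_mulVec_eq_zero_iff.mpr hdet
  have hvV : M.mulVec v = μ • v := by
    rw [Matrix.sub_mulVec, Matrix.smul_mulVec, Matrix.one_mulVec] at hv
    exact (sub_eq_zero.mp hv).symm
  -- eigenspace
  set V : Submodule ℂ (Fin n → ℂ) :=
    LinearMap.ker (M.mulVecLin - μ • LinearMap.id) with hVdef
  have hmemV : ∀ w, w ∈ V ↔ M.mulVec w = μ • w := by
    intro w
    simp only [hVdef, LinearMap.mem_ker, LinearMap.sub_apply, LinearMap.smul_apply,
      LinearMap.id_apply, Matrix.mulVecLin_apply, sub_eq_zero]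
  have hvmem : v ∈ V := (hmemV v).mpr hvV
  -- invariance
  have hinv : ∀ x : G, ∀ w ∈ V, (φ x).mulVec w ∈ V := by
    intro x w hw
    rw [hmemV] at hw ⊢
    rw [Matrix.mulVec_mulVec, (hc x).eq, ← Matrix.mulVec_mulVec, hw,
      Matrix.mulVec_smul]
  -- the determinant character
  have hrest : ∀ x : G, ∀ w : V,
      (((φ x).mulVecLin.restrict (fun w hw => hinv x w hw)) w : Fin n → ℂ) = (φ x).mulVec w :=
    fun x w => LinearMap.restrict_coe_apply _ _ _
  let ψ : G →* ℂ :=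
    { toFun := fun x => LinearMap.det ((φ x).mulVecLin.restrict (fun w hw => hinv x w hw))
      map_one' := by
        show LinearMap.det ((φ (1 : G)).mulVecLin.restrict (fun w hw => hinv 1 w hw)) = 1
        have h1 : ((φ (1 : G)).mulVecLin.restrict (fun w hw => hinv 1 w hw)) = LinearMap.id := by
          apply LinearMap.ext
          intro w
          apply Subtype.ext
          rw [hrest]
          simp
        rw [h1, LinearMap.det_id]
      map_mul' := by
        intro x y
        show LinearMap.det ((φ (x * y)).mulVecLin.restrict (fun w hw => hinv (x*y) w hw))
          = LinearMap.det ((φ x).mulVecLin.restrict (fun w hw => hinv x w hw))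
            * LinearMap.det ((φ y).mulVecLin.restrict (fun w hw => hinv y w hw))
        have h1 : ((φ (x * y)).mulVecLin.restrict (fun w hw => hinv (x*y) w hw))
            = ((φ x).mulVecLin.restrict (fun w hw => hinv x w hw)).comp
              ((φ y).mulVecLin.restrict (fun w hw => hinv y w hw)) := by
          apply LinearMap.ext
          intro w
          apply Subtype.ext
          rw [hrest]
          simp only [LinearMap.comp_apply]
          rw [hrest, hrest, map_mul φ, Matrix.mulVec_mulVec]
        rw [h1, LinearMap.det_comp] }
  -- ψ kills the commutator subgroup
  have hψg1 : ψ g = 1 := by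
    have hker : commutator G ≤ ψ.toHomUnits.ker := by
      rw [commutator_def]
      rw [Subgroup.commutator_le]
      intro a _ b _
      rw [MonoidHom.mem_ker, map_commutatorElement]
      exact commutatorElement_eq_one_iff_commute.mpr (mul_comm _ _)
    have := hker hg
    rw [MonoidHom.mem_ker] at this
    calc ψ g = ((ψ.toHomUnits g : ℂˣ) : ℂ) := (MonoidHom.coe_toHomUnits ψ g).symm
    _ = ((1 : ℂˣ) : ℂ) := by rw [this]
    _ = 1 := rfl
  -- ψ g = μ ^ finrank V
  have hψg2 : ψ g = μ ^ (Module.finrank ℂ V) := by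
    have h1 : ((φ g).mulVecLin.restrict (fun w hw => hinv g w hw))
        = μ • (LinearMap.id : V →ₗ[ℂ] V) := by
      apply LinearMap.ext
      intro w
      apply Subtype.ext
      rw [hrest]
      show (φ g) *ᵥ (w : Fin n → ℂ) = ((μ • (LinearMap.id : V →ₗ[ℂ] V)) w : Fin n → ℂ)
      rw [LinearMap.smul_apply, LinearMap.id_apply, SetLike.val_smul]
      exact (hmemV _).mp w.2
    show LinearMap.det _ = _
    rw [h1, LinearMap.det_smul, LinearMap.det_id, mul_one]
  have hd1 : 0 < Module.finrank ℂ V := by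
    have : Nontrivial V := ⟨⟨⟨v, hvmem⟩, 0, by
      intro h
      exact hv0 (by simpa using congrArg (Subtype.val) h)⟩⟩
    exact Module.finrank_pos
  have hd2 : Module.finrank ℂ V ≤ n := by
    have h := Submodule.finrank_le V
    simpa [Module.finrank_pi] using h
  have hdvd : Module.finrank ℂ V ∣ n.factorial := Nat.dvd_factorial hd1 hd2
  have hμd : μ ^ (Module.finrank ℂ V) = 1 := by rw [← hψg2, hψg1]
  calc μ ^ n.factorial = μ ^ (Module.finrank ℂ V * (n.factorial / Module.finrank ℂ V)) := by
        rw [Nat.mul_div_cancel' hdvd]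
  _ = (μ ^ (Module.finrank ℂ V)) ^ (n.factorial / Module.finrank ℂ V) := pow_mul _ _ _
  _ = 1 := by rw [hμd, one_pow]

open scoped commutatorElement in
set_option maxHeartbeats 1000000 in
/-- Let `Γ` be a finitely generated nilpotent group, `K` a closed subgroup of `U(n)` and
`i ≥ 2`. The subset `X_i = {ρ : Γ_(i) ⊆ ker ρ}` of `Hom(Γ,K)` (canonically homeomorphic to
`Hom(Γ/Γ_(i),K)`) is a union of connected components of `Hom(Γ,K)`. -/
theorem factoring_reps_union_of_components_unitary
    (n : ℕ) (K : Subgroup (Matrix.unitaryGroup (Fin n) ℂ))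
    (hK : IsClosed (K : Set (Matrix.unitaryGroup (Fin n) ℂ)))
    (Γ : Type*) [Group Γ] (hfg : Group.FG Γ) (hnil : Group.IsNilpotent Γ)
    (i : ℕ) (hi : 2 ≤ i)
    (ρ : Γ →* ↥K) (hρ : (⊤ : Subgroup Γ).lowerCentralSeries (i - 1) ≤ ρ.ker) :
    connectedComponent ρ ⊆ {σ : Γ →* ↥K | (⊤ : Subgroup Γ).lowerCentralSeries (i - 1) ≤ σ.ker} := by
  classical
  let φ : (Γ →* ↥K) → Γ →* Matrix (Fin n) (Fin n) ℂ := fun τ =>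
    ((unitary (Matrix (Fin n) (Fin n) ℂ)).subtype).comp ((K.subtype).comp τ)
  have hφ_unitary : ∀ (τ : Γ →* ↥K) (x : Γ), φ τ x ∈ Matrix.unitaryGroup (Fin n) ℂ :=
    fun τ x => (K.subtype (τ x)).2
  set T : Set ℂ := (fun f : Fin n → ℂ => ∑ i, f i) ''
    {f : Fin n → ℂ | ∀ j, f j ^ n.factorial = 1} with hTdef
  have hT : T.Finite := by
    apply Set.Finite.image
    have h1 : {f : Fin n → ℂ | ∀ j, f j ^ n.factorial = 1}
        = Set.pi Set.univ (fun _ : Fin n => {z : ℂ | z ^ n.factorial = 1}) := by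
      ext f; simp [Set.mem_pi]
    rw [h1]
    apply Set.Finite.pi
    intro j
    have hp : ((X : ℂ[X]) ^ n.factorial - 1) ≠ 0 := by
      intro h
      have := congrArg (Polynomial.eval 0) h
      simp [zero_pow (Nat.factorial_pos n).ne'] at this
    have hsub : {z : ℂ | z ^ n.factorial = 1}
        ⊆ {z : ℂ | ((X : ℂ[X]) ^ n.factorial - 1).IsRoot z} := by
      intro z hz
      simp only [Set.mem_setOf_eq, Polynomial.IsRoot, Polynomial.eval_sub,
        Polynomial.eval_pow, Polynomial.eval_X, Polynomial.eval_one]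
      rw [Set.mem_setOf_eq] at hz
      rw [hz]; ring
    exact Set.Finite.subset (Polynomial.finite_setOf_isRoot hp) hsub
  obtain ⟨c, hc⟩ := Subgroup.nilpotent_iff_lowerCentralSeries.mp hnil
  have hm1 : 1 ≤ i - 1 := by omega
  have step : ∀ j : ℕ, 1 ≤ j → (⊤ : Subgroup Γ).lowerCentralSeries j ≤ ρ.ker →
      (∀ σ ∈ connectedComponent ρ, (⊤ : Subgroup Γ).lowerCentralSeries (j + 1) ≤ σ.ker) →
      ∀ σ ∈ connectedComponent ρ, (⊤ : Subgroup Γ).lowerCentralSeries j ≤ σ.ker := by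
    intro j hj hρj hIH σ hσ γ hγ
    have hroots : ∀ τ, τ ∈ connectedComponent ρ →
        ∀ μ ∈ (Matrix.charpoly (φ τ γ)).roots, μ ^ n.factorial = 1 := by
      intro τ hτ μ hμ
      have hcomm : ∀ x : Γ, Commute (φ τ γ) (φ τ x) := by
        intro x
        have h1 : τ ⁅γ, x⁆ = 1 := by
          have : ⁅γ, x⁆ ∈ (⊤ : Subgroup Γ).lowerCentralSeries (j + 1) := by
            rw [Subgroup.lowerCentralSeries_succ]
            exact Subgroup.commutator_mem_commutator hγ (Subgroup.mem_top x)
          exact hIH τ hτ this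
        have h2 : Commute (τ γ) (τ x) := by
          apply commutatorElement_eq_one_iff_commute.mp
          rw [← map_commutatorElement, h1]
        exact h2.map ((unitary (Matrix (Fin n) (Fin n) ℂ)).subtype.comp K.subtype)
      have hgcomm : γ ∈ commutator Γ := by
        rw [← Subgroup.top_lowerCentralSeries_one]
        exact Subgroup.lowerCentralSeries_antitone ⊤ hj hγ
      exact eigenvalue_pow_factorial_eq_one (φ τ) γ hgcomm hcomm
        (Polynomial.isRoot_of_mem_roots hμ)
    have htrmem : ∀ τ, τ ∈ connectedComponent ρ → (φ τ γ).trace ∈ T := by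
      intro τ hτ
      set p := Matrix.charpoly (φ τ γ) with hpdef
      have hcard : p.roots.card = n := by
        rw [Polynomial.splits_iff_card_roots.mp (IsAlgClosed.splits p),
          Matrix.charpoly_natDegree_eq_dim]
        simp
      have hlen : p.roots.toList.length = n := by rw [Multiset.length_toList, hcard]
      refine ⟨fun k : Fin n => p.roots.toList.get (Fin.cast hlen.symm k), ?_, ?_⟩
      · intro k
        apply hroots τ hτ
        rw [← Multiset.mem_toList]
        show p.roots.toList.get (Fin.cast hlen.symm k) ∈ p.roots.toList
        exact List.get_mem _ _
      · have h1 : ∑ k : Fin n, p.roots.toList.get (Fin.cast hlen.symm k)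
            = ∑ k : Fin (p.roots.toList.length), p.roots.toList.get k :=
          Fin.sum_congr' _ hlen.symm
        show (∑ k : Fin n, p.roots.toList.get (Fin.cast hlen.symm k)) = (φ τ γ).trace
        rw [h1, ← List.sum_ofFn, List.ofFn_get, Multiset.sum_toList]
        exact (Matrix.trace_eq_sum_roots_charpoly _).symm
    have hFcont : Continuous fun τ : Γ →* ↥K => (φ τ γ).trace := by
      have h1 : Continuous fun τ : Γ →* ↥K => τ γ :=
        (continuous_apply γ).comp continuous_induced_dom
      have h2 : Continuous fun τ : Γ →* ↥K => (φ τ γ : Matrix (Fin n) (Fin n) ℂ) :=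
        continuous_subtype_val.comp (continuous_subtype_val.comp h1)
      exact h2.matrix_trace
    haveI : PreconnectedSpace (connectedComponent ρ) :=
      Subtype.preconnectedSpace isPreconnected_connectedComponent
    haveI : Finite T := hT.to_subtype
    haveI : DiscreteTopology T := by infer_instance
    let Fc : (connectedComponent ρ) → T := fun τ => ⟨(φ τ.1 γ).trace, htrmem τ.1 τ.2⟩
    have hFc : Continuous Fc :=
      Continuous.subtype_mk (hFcont.comp continuous_subtype_val) _
    have hconst := ((IsLocallyConstant.iff_continuous Fc).mpr hFc).apply_eq_of_preconnectedSpace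
      (⟨σ, hσ⟩ : connectedComponent ρ) (⟨ρ, mem_connectedComponent⟩ : connectedComponent ρ)
    have htrρ : (φ ρ γ).trace = n := by
      have hργ : ρ γ = 1 := hρj hγ
      have hone : φ ρ γ = 1 := by simp [φ, hργ]
      rw [hone, Matrix.trace_one]
      simp
    have htrσ : (φ σ γ).trace = n := by
      have := congrArg Subtype.val hconst
      simp only [Fc] at this
      rw [this, htrρ]
    have hmat : φ σ γ = 1 := unitary_trace_eq_card_eq_one _ (hφ_unitary σ γ) htrσ
    have hσγ : σ γ = 1 := by
      apply Subtype.ext; apply Subtype.ext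
      simpa [φ] using hmat
    exact MonoidHom.mem_ker.mpr hσγ
  have main : ∀ k j, i - 1 ≤ j → c ≤ j + k →
      ∀ σ ∈ connectedComponent ρ, (⊤ : Subgroup Γ).lowerCentralSeries j ≤ σ.ker := by
    intro k
    induction k with
    | zero =>
      intro j hmj hcj σ hσ
      have hle : (⊤ : Subgroup Γ).lowerCentralSeries j ≤ (⊤ : Subgroup Γ).lowerCentralSeries c :=
        Subgroup.lowerCentralSeries_antitone ⊤ (by omega)
      rw [hc] at hle
      exact le_trans hle bot_le
    | succ k ih =>
      intro j hmj hcj σ hσ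
      by_cases h : c ≤ j + k
      · exact ih j hmj h σ hσ
      · exact step j (le_trans hm1 hmj)
          (le_trans (Subgroup.lowerCentralSeries_antitone ⊤ hmj) hρ)
          (fun σ' hσ' => ih (j+1) (by omega) (by omega) σ' hσ') σ hσ
  intro σ hσ
  exact main c (i-1) le_rfl (by omega) σ hσ
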